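/- Let T(R) be the parse tree of an extended regular expression R with k ≥ 1 nodes labeled by an extended operator, and let CS be its cluster partition. Then the parent in T(R) of the root of every leaf cluster is a node labeled by an extended operator, and consequently the macro tree has at most 2k leaf clusters. -/

import Mathlib

/-- Extended regular expressions over alphabet `α`; their syntax trees are the parse trees. -/
inductive ERE (α : Type) : Type
  | eps : ERE α
  | char : α → ERE α
  | concat : ERE α → ERE α → ERE α
  | union : ERE α → ERE α → ERE α
  | inter : ERE α → ERE α → ERE α
  | compl : ERE α → ERE α
  | star : ERE α → ERE α

/-- Nodes of the parse tree `T(R)` are addressed by root-to-node paths (`false` = left/only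
child, `true` = right child); `subtreeAt R p` is the subexpression rooted at node `p`,
or `none` if `p` is not a node of `T(R)`. -/
def subtreeAt {α : Type} : ERE α → List Bool → Option (ERE α)
  | R, [] => some R
  | .concat S T, b :: p => subtreeAt (bif b then T else S) p
  | .union S T, b :: p => subtreeAt (bif b then T else S) p
  | .inter S T, b :: p => subtreeAt (bif b then T else S) p
  | .compl S, false :: p => subtreeAt S p
  | .star S, false :: p => subtreeAt S p
  | _, _ => none

/-- `p` is a node of the parse tree of `R`. -/
def IsNode {α : Type} (R : ERE α) (p : List Bool) : Prop := (subtreeAt R p).isSome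

/-- `p` is a node of the parse tree of `R` labeled by an extended operator (`∩` or `¬`). -/
def IsExtOpNode {α : Type} (R : ERE α) (p : List Bool) : Prop :=
  (∃ S T, subtreeAt R p = some (ERE.inter S T)) ∨ (∃ S, subtreeAt R p = some (ERE.compl S))

/-- `K R`: the set of nodes labeled by an extended operator. -/
def extOpNodes {α : Type} (R : ERE α) : Set (List Bool) := {p | IsExtOpNode R p}

/-- Longest common prefix = lowest common ancestor of two nodes. -/
def lcp : List Bool → List Bool → List Bool
  | a :: u, b :: v => if a = b then a :: lcp u v else []
  | _, _ => []

/-- `P R = K ∪ { lca(u,v) : u, v ∈ K }`: the set of extended nodes. -/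
def extNodes {α : Type} (R : ERE α) : Set (List Bool) :=
  extOpNodes R ∪ {w | ∃ u ∈ extOpNodes R, ∃ v ∈ extOpNodes R, w = lcp u v}

/-- An edge of `T(R)` from a node `p ∈ P` to a child of `p` is external; all other edges are
internal.  The clusters are the connected components after deleting the external edges; each
cluster is identified by its root, namely the node `r` that is either the root of `T(R)` or
whose parent edge is external. -/
def IsClusterRoot {α : Type} (R : ERE α) (r : List Bool) : Prop :=
  IsNode R r ∧ (r = [] ∨ r.dropLast ∈ extNodes R)

/-- The cluster with root `r`: all nodes `u` reachable from `r` going only through internal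
edges (the parent of a node `q` is `q.dropLast`). -/
def cluster {α : Type} (R : ERE α) (r : List Bool) : Set (List Bool) :=
  {u | IsNode R u ∧ r <+: u ∧
    ∀ q : List Bool, r <+: q → q <+: u → q ≠ r → q.dropLast ∉ extNodes R}

/-- In the macro tree, a cluster `C'` with root `q` is a child cluster of the cluster with
root `r` when the parent of `q` belongs to `cluster R r`. -/
def HasChildCluster {α : Type} (R : ERE α) (r : List Bool) : Prop :=
  ∃ q : List Bool, IsClusterRoot R q ∧ q ≠ [] ∧ q.dropLast ∈ cluster R r

/-- A leaf cluster: a cluster with no child cluster in the macro tree. -/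
def IsLeafCluster {α : Type} (R : ERE α) (r : List Bool) : Prop :=
  IsClusterRoot R r ∧ ¬ HasChildCluster R r

/-- An internal cluster: a cluster with at least one child cluster in the macro tree. -/
def IsInternalCluster {α : Type} (R : ERE α) (r : List Bool) : Prop :=
  IsClusterRoot R r ∧ HasChildCluster R r

section Aux

variable {α : Type}

theorem subtreeAt_append (R : ERE α) (p q : List Bool) :
    subtreeAt R (p ++ q) = (subtreeAt R p).bind (fun S => subtreeAt S q) := by
  induction p generalizing R with
  | nil => simp [subtreeAt]
  | cons b p ih =>
    cases R with
    | eps => cases b <;> simp [subtreeAt]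
    | char a => cases b <;> simp [subtreeAt]
    | concat S T => cases b <;> simpa [subtreeAt] using ih _
    | union S T => cases b <;> simpa [subtreeAt] using ih _
    | inter S T => cases b <;> simpa [subtreeAt] using ih _
    | compl S => cases b <;> simp [subtreeAt, ih]
    | star S => cases b <;> simp [subtreeAt, ih]

theorem isNode_of_prefix {R : ERE α} {u p : List Bool} (h : IsNode R u) (hp : p <+: u) :
    IsNode R p := by
  obtain ⟨t, rfl⟩ := hp
  rw [IsNode, subtreeAt_append] at h
  unfold IsNode
  cases hs : subtreeAt R p with
  | none => rw [hs] at h; simp at h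
  | some S => simp

theorem isNode_child_of_extOp {R : ERE α} {u : List Bool} (hu : u ∈ extOpNodes R) :
    IsNode R (u ++ [false]) := by
  rw [IsNode, subtreeAt_append]
  rcases hu with ⟨S, T, h⟩ | ⟨S, h⟩ <;> simp [h, subtreeAt]

theorem isNode_of_extOp {R : ERE α} {u : List Bool} (hu : u ∈ extOpNodes R) : IsNode R u := by
  rcases hu with ⟨S, T, h⟩ | ⟨S, h⟩ <;> simp [IsNode, h]

theorem lcp_prefix_left : ∀ u v : List Bool, lcp u v <+: u
  | [], _ => by simp [lcp]
  | _ :: _, [] => by simp [lcp]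
  | a :: u, b :: v => by
    by_cases h : a = b
    · simpa [lcp, h] using lcp_prefix_left u v
    · simp [lcp, h]

theorem lcp_cases : ∀ u v : List Bool, lcp u v = u ∨ lcp u v = v ∨
    ∀ c : Bool, lcp u v ++ [c] <+: u ∨ lcp u v ++ [c] <+: v
  | [], _ => Or.inl (by simp [lcp])
  | _ :: _, [] => Or.inr (Or.inl (by simp [lcp]))
  | a :: u, b :: v => by
    by_cases h : a = b
    · subst h
      rcases lcp_cases u v with h' | h' | h'
      · exact Or.inl (by simp [lcp, h'])
      · exact Or.inr (Or.inl (by simp [lcp, h']))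
      · refine Or.inr (Or.inr fun c => ?_)
        rcases h' c with hc | hc
        · exact Or.inl (by simpa [lcp] using hc)
        · exact Or.inr (by simpa [lcp] using hc)
    · refine Or.inr (Or.inr fun c => ?_)
      rcases Bool.eq_false_or_eq_true a with ha | ha <;>
        rcases Bool.eq_false_or_eq_true b with hb | hb <;>
          try (exact absurd (ha.trans hb.symm) h)
      all_goals cases c
      all_goals simp [lcp, h, ha, hb]

theorem prefix_dropLast_of_ne {r q : List Bool} (h : r <+: q) (hne : q ≠ r) :
    r <+: q.dropLast := by
  obtain ⟨t, rfl⟩ := h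
  cases t with
  | nil => simp at hne
  | cons c t' =>
    have : (r ++ c :: t').dropLast = r ++ (c :: t').dropLast := by
      rw [List.dropLast_append_of_ne_nil (by simp)]
    rw [this]
    exact ⟨_, rfl⟩

/-- If there is an extended-operator node below (or equal to) a cluster root `r`, then the
cluster of `r` has a child cluster. -/
theorem hasChild_of_extOp_above {R : ERE α} {r : List Bool} (hr : IsClusterRoot R r)
    {u : List Bool} (hu : u ∈ extOpNodes R) (hru : r <+: u) : HasChildCluster R r := by
  have hnodeu : IsNode R u := isNode_of_extOp hu
  by_cases hW : ∃ n, r <+: u.take n ∧ u.take n ≠ r ∧ (u.take n).dropLast ∈ extNodes R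
  · -- there is a "violating" prefix; take the shortest one: its parent is in the cluster
    classical
    set n := Nat.find hW with hn
    obtain ⟨h1, h2, h3⟩ := Nat.find_spec hW
    set q := u.take n with hq
    have hqu : q <+: u := List.take_prefix n u
    have hqnode : IsNode R q := isNode_of_prefix hnodeu hqu
    have hqne : q ≠ [] := by
      intro h
      exact h2 (h.trans (List.prefix_nil.1 (h ▸ h1)).symm)
    refine ⟨q, ⟨hqnode, Or.inr h3⟩, hqne, ?_, ?_, ?_⟩
    · exact isNode_of_prefix hnodeu ((List.dropLast_prefix q).trans hqu)
    · exact prefix_dropLast_of_ne h1 h2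
    · intro q' hq1 hq2 hq3 hq4
      have hq'u : q' <+: u := hq2.trans ((List.dropLast_prefix q).trans hqu)
      have hlen : q'.length < n := by
        have h5 : q'.length ≤ q.dropLast.length := hq2.length_le
        have h6 : q.dropLast.length = q.length - 1 := by
          simp [List.length_dropLast]
        have h7 : 0 < q.length := List.length_pos_iff.2 hqne
        have h8 : q.length ≤ n := by
          rw [hq, List.length_take]; exact min_le_left _ _
        omega
      have := Nat.find_min hW hlen
      rw [← List.prefix_iff_eq_take.1 hq'u] at this
      exact this ⟨hq1, hq3, hq4⟩
  · -- no violating prefix: `u` itself is in the cluster, and its left child is a cluster root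
    push_neg at hW
    have hucl : u ∈ cluster R r := by
      refine ⟨hnodeu, hru, fun q hq1 hq2 hq3 hq4 => ?_⟩
      have := hW q.length
      rw [← List.prefix_iff_eq_take.1 hq2] at this
      exact this hq1 hq3 hq4
    refine ⟨u ++ [false], ⟨isNode_child_of_extOp hu, Or.inr ?_⟩, by simp, ?_⟩
    · rw [List.dropLast_concat]; exact Or.inl hu
    · rw [List.dropLast_concat]; exact hucl

end Aux

/-- If the parse tree of `R` has `k ≥ 1` nodes labeled by an extended operator, then the
parent of the root of every leaf cluster is a node labeled by an extended operator, and
consequently the macro tree has at most `2k` leaf clusters. -/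
theorem leafCluster_parent_and_count {α : Type} (R : ERE α) (k : ℕ)
    (hk : (extOpNodes R).ncard = k) (hk1 : 1 ≤ k) :
    (∀ r, IsLeafCluster R r → r ≠ [] ∧ r.dropLast ∈ extOpNodes R) ∧
    {r | IsLeafCluster R r}.ncard ≤ 2 * k := by
  classical
  -- there is at least one extended-operator node
  obtain ⟨u0, hu0⟩ : (extOpNodes R).Nonempty :=
    Set.nonempty_of_ncard_ne_zero (by omega)
  -- Part 1
  have part1 : ∀ r, IsLeafCluster R r → r ≠ [] ∧ r.dropLast ∈ extOpNodes R := by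
    intro r hr
    obtain ⟨hroot, hnochild⟩ := hr
    have hrne : r ≠ [] := by
      rintro rfl
      exact hnochild (hasChild_of_extOp_above hroot hu0 List.nil_prefix)
    refine ⟨hrne, ?_⟩
    rcases hroot.2 with h | h
    · exact absurd h hrne
    rcases h with h | ⟨u, hu, v, hv, hlcp⟩
    · exact h
    rcases lcp_cases u v with he | he | he
    · rw [hlcp, he]; exact hu
    · rw [hlcp, he]; exact hv
    · exfalso
      set c := r.getLast hrne with hc
      have hrc : r.dropLast ++ [c] = r := List.dropLast_append_getLast hrne
      rw [hlcp] at hrc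
      rcases he c with hp | hp
      · rw [hrc] at hp
        exact hnochild (hasChild_of_extOp_above hroot hu hp)
      · rw [hrc] at hp
        exact hnochild (hasChild_of_extOp_above hroot hv hp)
  refine ⟨part1, ?_⟩
  -- Part 2: counting
  have hKfin : (extOpNodes R).Finite := by
    by_contra h
    rw [Set.Infinite.ncard h] at hk
    omega
  set Sb : Bool → Set (List Bool) :=
    fun b => {r | IsLeafCluster R r ∧ r.getLast? = some b} with hSb
  have hmaps : ∀ b, ∀ r ∈ Sb b, r.dropLast ∈ extOpNodes R := by
    intro b r hr
    exact (part1 r hr.1).2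
  have hinj : ∀ b, Set.InjOn List.dropLast (Sb b) := by
    intro b r1 h1 r2 h2 hd
    have e1 : r1 ≠ [] := (part1 r1 h1.1).1
    have e2 : r2 ≠ [] := (part1 r2 h2.1).1
    have g1 : r1.getLast? = some (r1.getLast e1) := List.getLast?_eq_getLast e1
    have g2 : r2.getLast? = some (r2.getLast e2) := List.getLast?_eq_getLast e2
    have b1 : r1.getLast e1 = b := by
      have := h1.2; rw [g1] at this; exact (Option.some_injective _ this)
    have b2 : r2.getLast e2 = b := by
      have := h2.2; rw [g2] at this; exact (Option.some_injective _ this)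
    calc r1 = r1.dropLast ++ [r1.getLast e1] := (List.dropLast_append_getLast e1).symm
      _ = r2.dropLast ++ [r2.getLast e2] := by rw [b1, b2, hd]
      _ = r2 := List.dropLast_append_getLast e2
  have hbcard : ∀ b, (Sb b).ncard ≤ k := by
    intro b
    rw [← hk]
    exact Set.ncard_le_ncard_of_injOn List.dropLast (hmaps b) (hinj b) hKfin
  have hbfin : ∀ b, (Sb b).Finite := by
    intro b
    refine Set.Finite.of_finite_image ?_ (hinj b)
    exact hKfin.subset (by rintro _ ⟨r, hr, rfl⟩; exact hmaps b r hr)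
  have hsub : {r | IsLeafCluster R r} ⊆ Sb false ∪ Sb true := by
    intro r hr
    have hrne : r ≠ [] := (part1 r hr).1
    have g : r.getLast? = some (r.getLast hrne) := List.getLast?_eq_getLast hrne
    cases hb : r.getLast hrne
    · exact Or.inl ⟨hr, by rw [g, hb]⟩
    · exact Or.inr ⟨hr, by rw [g, hb]⟩
  calc {r | IsLeafCluster R r}.ncard
      ≤ (Sb false ∪ Sb true).ncard :=
        Set.ncard_le_ncard hsub ((hbfin false).union (hbfin true))
    _ ≤ (Sb false).ncard + (Sb true).ncard := Set.ncard_union_le _ _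
    _ ≤ k + k := Nat.add_le_add (hbcard false) (hbcard true)
    _ = 2 * k := by ring
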